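/- Let A and E be n×n real symmetric matrices and set Ã = A + E. Let λ₁ ≤ λ₂ ≤ ⋯ ≤ λₙ be the eigenvalues of A with a corresponding orthonormal basis of eigenvectors u₁, …, uₙ, and let λ̃₁ ≤ ⋯ ≤ λ̃ₙ be the eigenvalues of Ã with orthonormal eigenvectors ũ₁, …, ũₙ. Fix 1 ≤ ρ < n and assume λ̃_{ρ+1} > λ_ρ. Let U₁ = [u₁ ⋯ u_ρ] and Ũ₂ = [ũ_{ρ+1} ⋯ ũₙ]. Then ‖Ũ₂ᵀU₁‖₂ ≤ σ_max(E) / (λ̃_{ρ+1} − λ_ρ), where σ_max(E) is the largest singular value of E. -/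

import Mathlib

open Matrix

/-- The spectral norm (operator 2-norm, largest singular value) of a real matrix:
the supremum of the Euclidean norm of `M.mulVec x` over the Euclidean unit ball. -/
noncomputable def specNorm {m n : ℕ} (M : Matrix (Fin m) (Fin n) ℝ) : ℝ :=
  sSup {r : ℝ | ∃ x : Fin n → ℝ, (∑ i, (x i) ^ 2) ≤ 1 ∧
    r = Real.sqrt (∑ j, (M.mulVec x j) ^ 2)}

lemma specNorm_mem_zero {m n : ℕ} (M : Matrix (Fin m) (Fin n) ℝ) :
    (0 : ℝ) ∈ {r : ℝ | ∃ x : Fin n → ℝ, (∑ i, (x i) ^ 2) ≤ 1 ∧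
      r = Real.sqrt (∑ j, (M.mulVec x j) ^ 2)} := by
  refine ⟨0, by simp, ?_⟩
  simp [Matrix.mulVec_zero]

lemma specNorm_bdd {m n : ℕ} (M : Matrix (Fin m) (Fin n) ℝ) :
    BddAbove {r : ℝ | ∃ x : Fin n → ℝ, (∑ i, (x i) ^ 2) ≤ 1 ∧
      r = Real.sqrt (∑ j, (M.mulVec x j) ^ 2)} := by
  refine ⟨Real.sqrt (∑ j, ∑ i, M j i ^ 2), ?_⟩
  rintro r ⟨x, hx, rfl⟩
  apply Real.sqrt_le_sqrt
  refine Finset.sum_le_sum fun j _ => ?_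
  have h := Finset.sum_mul_sq_le_sq_mul_sq Finset.univ (fun i => M j i) x
  calc (M.mulVec x j) ^ 2 = (∑ i, M j i * x i) ^ 2 := rfl
    _ ≤ (∑ i, M j i ^ 2) * ∑ i, x i ^ 2 := h
    _ ≤ (∑ i, M j i ^ 2) * 1 :=
        mul_le_mul_of_nonneg_left hx (Finset.sum_nonneg fun _ _ => sq_nonneg _)
    _ = ∑ i, M j i ^ 2 := mul_one _

lemma le_specNorm {m n : ℕ} (M : Matrix (Fin m) (Fin n) ℝ) (x : Fin n → ℝ)
    (hx : (∑ i, (x i) ^ 2) ≤ 1) :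
    Real.sqrt (∑ j, (M.mulVec x j) ^ 2) ≤ specNorm M :=
  le_csSup (specNorm_bdd M) ⟨x, hx, rfl⟩

lemma specNorm_nonneg {m n : ℕ} (M : Matrix (Fin m) (Fin n) ℝ) : 0 ≤ specNorm M :=
  le_csSup (specNorm_bdd M) (specNorm_mem_zero M)

lemma specNorm_le {m n : ℕ} (M : Matrix (Fin m) (Fin n) ℝ) (c : ℝ)
    (h : ∀ x : Fin n → ℝ, (∑ i, (x i) ^ 2) ≤ 1 →
      Real.sqrt (∑ j, (M.mulVec x j) ^ 2) ≤ c) :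
    specNorm M ≤ c := by
  apply csSup_le ⟨0, specNorm_mem_zero M⟩
  rintro r ⟨x, hx, rfl⟩
  exact h x hx

lemma rayleigh_exists (ρ : ℕ) (hρ : 0 < ρ) (M : Matrix (Fin ρ) (Fin ρ) ℝ)
    (hM : M.IsHermitian) :
    ∃ (μ : ℝ) (v : Fin ρ → ℝ), (∑ i, v i ^ 2 = 1) ∧ M.mulVec v = μ • v ∧
      ∀ x : Fin ρ → ℝ, x ⬝ᵥ M.mulVec x ≤ μ * ∑ i, x i ^ 2 := by
  haveI : Nonempty (Fin ρ) := ⟨⟨0, hρ⟩⟩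
  obtain ⟨i₀, hi₀⟩ := Finite.exists_max hM.eigenvalues
  have hMt : Mᵀ = M := by
    ext i j
    simpa [Matrix.conjTranspose_apply] using congrFun (congrFun hM i) j
  set b := hM.eigenvectorBasis with hb
  have key : ∀ (x y : Fin ρ → ℝ),
      (@inner ℝ (EuclideanSpace ℝ (Fin ρ)) _
        ((WithLp.equiv 2 _).symm x) ((WithLp.equiv 2 _).symm y)) = x ⬝ᵥ y := by
    intro x y
    simp [PiLp.inner_apply, RCLike.inner_apply, dotProduct, mul_comm]
  have keyb : ∀ (i : Fin ρ) (y : Fin ρ → ℝ),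
      (@inner ℝ (EuclideanSpace ℝ (Fin ρ)) _ (b i) ((WithLp.equiv 2 _).symm y))
        = (fun k => b i k) ⬝ᵥ y := by
    intro i y
    simp [PiLp.inner_apply, RCLike.inner_apply, dotProduct, mul_comm]
  have keyb2 : ∀ (y : Fin ρ → ℝ) (i : Fin ρ),
      (@inner ℝ (EuclideanSpace ℝ (Fin ρ)) _ ((WithLp.equiv 2 _).symm y) (b i))
        = y ⬝ᵥ (fun k => b i k) := by
    intro y i
    simp [PiLp.inner_apply, RCLike.inner_apply, dotProduct, mul_comm]
  have F1 : ∀ i : Fin ρ, M.mulVec (fun k => b i k) = hM.eigenvalues i • (fun k => b i k) := by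
    intro i
    funext k
    exact congrFun (hM.mulVec_eigenvectorBasis i) k
  have F2 : ∀ (x : Fin ρ → ℝ) (i : Fin ρ),
      (fun k => b i k) ⬝ᵥ M.mulVec x = hM.eigenvalues i * ((fun k => b i k) ⬝ᵥ x) := by
    intro x i
    rw [Matrix.dotProduct_mulVec, ← Matrix.mulVec_transpose, hMt, F1, smul_dotProduct,
      smul_eq_mul]
  have F3 : ∀ (x y : Fin ρ → ℝ),
      x ⬝ᵥ y = ∑ i, (x ⬝ᵥ (fun k => b i k)) * ((fun k => b i k) ⬝ᵥ y) := by
    intro x y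
    rw [← key x y, ← b.sum_inner_mul_inner]
    exact Finset.sum_congr rfl fun i _ => by rw [keyb, keyb2]
  refine ⟨hM.eigenvalues i₀, (fun k => b i₀ k), ?_, F1 i₀, ?_⟩
  · have h0 : (inner ℝ (b i₀) (b i₀) : ℝ) = 1 := by
      have := orthonormal_iff_ite.mp b.orthonormal i₀ i₀
      simpa using this
    have h1 : (fun k => b i₀ k) ⬝ᵥ (fun k => b i₀ k) = 1 :=
      (keyb i₀ (fun k => b i₀ k)).symm.trans h0
    simpa [dotProduct, pow_two] using h1
  · intro x
    rw [F3 x (M.mulVec x)]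
    have hsum : ∑ i, x i ^ 2 = ∑ i, (x ⬝ᵥ (fun k => b i k)) ^ 2 := by
      calc ∑ i, x i ^ 2 = x ⬝ᵥ x := by simp [dotProduct, pow_two]
        _ = ∑ i, (x ⬝ᵥ (fun k => b i k)) * ((fun k => b i k) ⬝ᵥ x) := F3 x x
        _ = ∑ i, (x ⬝ᵥ (fun k => b i k)) ^ 2 := by
            refine Finset.sum_congr rfl fun i _ => ?_
            rw [pow_two, dotProduct_comm (fun k => b i k) x]
    rw [hsum, Finset.mul_sum]
    refine Finset.sum_le_sum fun i _ => ?_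
    rw [F2, dotProduct_comm (fun k => b i k) x]
    nlinarith [sq_nonneg (x ⬝ᵥ fun k => b i k), hi₀ i]

/-- Spectral-norm claim of the perturbation lemma (Lemma 3 of the paper):
for symmetric `A` and `Ã = A + E` with ordered eigenvalues and orthonormal
eigenvector bases, `‖Ũ₂ᵀU₁‖₂ ≤ σ_max(E) / (λ̃_{ρ+1} − λ_ρ)`. -/
theorem perturbation_lemma_spectral
    (n ρ : ℕ) (hρ1 : 1 ≤ ρ) (hρn : ρ < n)
    (A E : Matrix (Fin n) (Fin n) ℝ) (hA : A.IsSymm) (hE : E.IsSymm)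
    -- eigenvalues and orthonormal eigenvectors of A, in increasing order
    (lam : Fin n → ℝ) (u : Fin n → Fin n → ℝ)
    (hlamMono : Monotone lam)
    (huOrtho : ∀ i j, ∑ x, u i x * u j x = if i = j then (1 : ℝ) else 0)
    (huEig : ∀ j, A.mulVec (u j) = lam j • u j)
    -- eigenvalues and orthonormal eigenvectors of Ã = A + E, in increasing order
    (tlam : Fin n → ℝ) (tu : Fin n → Fin n → ℝ)
    (htlamMono : Monotone tlam)
    (htuOrtho : ∀ i j, ∑ x, tu i x * tu j x = if i = j then (1 : ℝ) else 0)
    (htuEig : ∀ j, (A + E).mulVec (tu j) = tlam j • tu j)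
    -- eigengap assumption: λ̃_{ρ+1} > λ_ρ  (1-indexed; 0-indexed below)
    (hgap : lam ⟨ρ - 1, by omega⟩ < tlam ⟨ρ, hρn⟩)
    -- U₁ = [u₁ ⋯ u_ρ] and Ũ₂ = [ũ_{ρ+1} ⋯ ũ_n]
    (U₁ : Matrix (Fin n) (Fin ρ) ℝ)
    (hU₁ : ∀ x j, U₁ x j = u (Fin.castLE hρn.le j) x)
    (tU₂ : Matrix (Fin n) (Fin (n - ρ)) ℝ)
    (htU₂ : ∀ (x : Fin n) (j : Fin (n - ρ)), tU₂ x j = tu ⟨ρ + j.1, by omega⟩ x) :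
    specNorm (tU₂ᵀ * U₁) ≤
      specNorm E / (tlam ⟨ρ, hρn⟩ - lam ⟨ρ - 1, by omega⟩) := by
  classical
  have hδpos : (0:ℝ) < tlam ⟨ρ, hρn⟩ - lam ⟨ρ - 1, by omega⟩ := sub_pos.mpr hgap
  have hRHS0 : (0:ℝ) ≤ specNorm E / (tlam ⟨ρ, hρn⟩ - lam ⟨ρ - 1, by omega⟩) :=
    div_nonneg (specNorm_nonneg E) hδpos.le
  set W := tU₂ᵀ * U₁ with hWdef
  -- symmetry helpers
  have hsymAE : ∀ a : Fin n → ℝ, a ᵥ* (A + E) = (A + E) *ᵥ a := by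
    intro a
    rw [← Matrix.mulVec_transpose, (hA.add hE)]
  -- key entrywise identity
  have key : ∀ (j : Fin (n - ρ)) (i : Fin ρ),
      (tlam ⟨ρ + j.1, by omega⟩ - lam (Fin.castLE hρn.le i)) * W j i
        = (tU₂ᵀ * (E * U₁)) j i := by
    intro j i
    have hdotW : W j i = tu ⟨ρ + j.1, by omega⟩ ⬝ᵥ u (Fin.castLE hρn.le i) := by
      simp only [hWdef, Matrix.mul_apply, Matrix.transpose_apply, dotProduct]
      exact Finset.sum_congr rfl fun x _ => by rw [htU₂, hU₁]
    have hdotR : (tU₂ᵀ * (E * U₁)) j i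
        = tu ⟨ρ + j.1, by omega⟩ ⬝ᵥ E.mulVec (u (Fin.castLE hρn.le i)) := by
      simp only [Matrix.mul_apply, Matrix.transpose_apply, dotProduct, Matrix.mulVec]
      refine Finset.sum_congr rfl fun x _ => ?_
      rw [htU₂]
      congr 1
      exact Finset.sum_congr rfl fun y _ => by rw [hU₁]
    have e1 : tu ⟨ρ + j.1, by omega⟩ ⬝ᵥ A.mulVec (u (Fin.castLE hρn.le i))
        = lam (Fin.castLE hρn.le i) * (tu ⟨ρ + j.1, by omega⟩ ⬝ᵥ u (Fin.castLE hρn.le i)) := by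
      rw [huEig, dotProduct_smul, smul_eq_mul]
    have e2 : tu ⟨ρ + j.1, by omega⟩ ⬝ᵥ (A + E).mulVec (u (Fin.castLE hρn.le i))
        = tlam ⟨ρ + j.1, by omega⟩ * (tu ⟨ρ + j.1, by omega⟩ ⬝ᵥ u (Fin.castLE hρn.le i)) := by
      rw [Matrix.dotProduct_mulVec, hsymAE, htuEig, smul_dotProduct, smul_eq_mul]
    have e3 : tu ⟨ρ + j.1, by omega⟩ ⬝ᵥ (A + E).mulVec (u (Fin.castLE hρn.le i))
        = tu ⟨ρ + j.1, by omega⟩ ⬝ᵥ A.mulVec (u (Fin.castLE hρn.le i))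
          + tu ⟨ρ + j.1, by omega⟩ ⬝ᵥ E.mulVec (u (Fin.castLE hρn.le i)) := by
      rw [Matrix.add_mulVec, dotProduct_add]
    have e4 := (e2.symm.trans e3)
    rw [e1] at e4
    rw [hdotW, hdotR]
    linear_combination e4
  -- orthonormality of the column blocks
  have hU₁o : U₁ᵀ * U₁ = 1 := by
    ext i i'
    simp only [Matrix.mul_apply, Matrix.transpose_apply]
    have h1 : ∑ x, U₁ x i * U₁ x i'
        = if (Fin.castLE hρn.le i) = (Fin.castLE hρn.le i') then (1:ℝ) else 0 := by
      rw [← huOrtho]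
      exact Finset.sum_congr rfl fun x _ => by rw [hU₁, hU₁]
    rw [h1, Matrix.one_apply]
    simp [Fin.castLE_inj]
  have htU₂o : tU₂ᵀ * tU₂ = 1 := by
    ext j j'
    simp only [Matrix.mul_apply, Matrix.transpose_apply]
    have h1 : ∑ x, tU₂ x j * tU₂ x j'
        = if (⟨ρ + j.1, by omega⟩ : Fin n) = ⟨ρ + j'.1, by omega⟩ then (1:ℝ) else 0 := by
      rw [← htuOrtho]
      exact Finset.sum_congr rfl fun x _ => by rw [htU₂, htU₂]
    rw [h1, Matrix.one_apply]
    by_cases h : j = j'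
    · subst h; simp
    · have hne : (⟨ρ + j.1, by omega⟩ : Fin n) ≠ ⟨ρ + j'.1, by omega⟩ := by
        simp only [ne_eq, Fin.mk.injEq]
        intro hc
        exact h (Fin.ext (by omega))
      simp [h, hne]
  have hnormU₁ : ∀ x : Fin ρ → ℝ, ∑ j, (U₁.mulVec x j) ^ 2 = ∑ i, x i ^ 2 := by
    intro x
    have h1 : ∑ j, (U₁.mulVec x j) ^ 2 = (U₁.mulVec x) ⬝ᵥ (U₁.mulVec x) := by
      simp [dotProduct, pow_two]
    rw [h1, Matrix.dotProduct_mulVec, ← Matrix.mulVec_transpose, Matrix.mulVec_mulVec,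
      hU₁o, Matrix.one_mulVec]
    simp [dotProduct, pow_two]
  have hnormtU₂ : ∀ x : Fin (n - ρ) → ℝ, ∑ j, (tU₂.mulVec x j) ^ 2 = ∑ i, x i ^ 2 := by
    intro x
    have h1 : ∑ j, (tU₂.mulVec x j) ^ 2 = (tU₂.mulVec x) ⬝ᵥ (tU₂.mulVec x) := by
      simp [dotProduct, pow_two]
    rw [h1, Matrix.dotProduct_mulVec, ← Matrix.mulVec_transpose, Matrix.mulVec_mulVec,
      htU₂o, Matrix.one_mulVec]
    simp [dotProduct, pow_two]
  -- Rayleigh data for M := Wᵀ * W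
  have hMherm : (Wᵀ * W).IsHermitian := by
    show (Wᵀ * W)ᴴ = Wᵀ * W
    have h1 : (Wᵀ * W)ᴴ = (Wᵀ * W)ᵀ := by
      ext i j
      simp [Matrix.conjTranspose_apply, Matrix.transpose_apply]
    rw [h1, Matrix.transpose_mul, Matrix.transpose_transpose]
  obtain ⟨μ, v, hv1, hv2, hv3⟩ := rayleigh_exists ρ (by omega) (Wᵀ * W) hMherm
  have hWx : ∀ x : Fin ρ → ℝ, ∑ j, (W.mulVec x j) ^ 2 = x ⬝ᵥ (Wᵀ * W).mulVec x := by
    intro x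
    conv_rhs => rw [← Matrix.mulVec_mulVec, Matrix.dotProduct_mulVec x, Matrix.vecMul_transpose]
    simp [dotProduct, pow_two]
  rcases le_or_gt μ 0 with hμ | hμ
  · -- degenerate case: W = 0 in effect
    apply specNorm_le
    intro x hx
    have h1 : ∑ j, (W.mulVec x j) ^ 2 ≤ 0 := by
      rw [hWx]
      refine (hv3 x).trans ?_
      exact mul_nonpos_iff.mpr (Or.inr ⟨hμ, Finset.sum_nonneg fun i _ => sq_nonneg _⟩)
    rw [Real.sqrt_eq_zero'.mpr (by exact h1)]
    exact hRHS0
  · set s := Real.sqrt μ with hs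
    have hspos : 0 < s := Real.sqrt_pos.mpr hμ
    have hs2 : s ^ 2 = μ := Real.sq_sqrt hμ.le
    set u0 : Fin (n - ρ) → ℝ := s⁻¹ • (W.mulVec v) with hu0
    have hvv : v ⬝ᵥ v = 1 := by simpa [dotProduct, pow_two] using hv1
    have hy2 : ∑ j, (W.mulVec v j) ^ 2 = μ := by
      rw [hWx, hv2, dotProduct_smul, smul_eq_mul, hvv, mul_one]
    have hu0n : ∑ j, u0 j ^ 2 = 1 := by
      simp only [hu0, Pi.smul_apply, smul_eq_mul, mul_pow]
      rw [← Finset.mul_sum, hy2, ← hs2]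
      field_simp
    have hWv : W.mulVec v = s • u0 := by
      rw [hu0, smul_smul, mul_inv_cancel₀ hspos.ne', one_smul]
    have hWtu0 : Wᵀ.mulVec u0 = s • v := by
      rw [hu0, Matrix.mulVec_smul, Matrix.mulVec_mulVec, hv2, smul_smul]
      congr 1
      rw [← hs2, pow_two, inv_mul_cancel_left₀ hspos.ne']
    have hWvj : ∀ j, ∑ i, W j i * v i = s * u0 j := by
      intro j
      have := congrFun hWv j
      simpa [Matrix.mulVec, dotProduct] using this
    have hWtu0i : ∀ i, ∑ j, W j i * u0 j = s * v i := by
      intro i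
      have := congrFun hWtu0 i
      simpa [Matrix.mulVec, dotProduct, Matrix.transpose_apply] using this
    -- the bilinear quantity S
    have hexp : u0 ⬝ᵥ (tU₂ᵀ * (E * U₁)).mulVec v
        = ∑ j, ∑ i, u0 j * ((tlam ⟨ρ + j.1, by omega⟩ - lam (Fin.castLE hρn.le i))
            * W j i * v i) := by
      simp only [dotProduct, Matrix.mulVec]
      refine Finset.sum_congr rfl fun j _ => ?_
      rw [Finset.mul_sum]
      refine Finset.sum_congr rfl fun i _ => ?_
      rw [← key j i]
    have hlow : s * (tlam ⟨ρ, hρn⟩ - lam ⟨ρ - 1, by omega⟩)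
        ≤ u0 ⬝ᵥ (tU₂ᵀ * (E * U₁)).mulVec v := by
      rw [hexp]
      have hsplit : ∀ (j : Fin (n - ρ)) (i : Fin ρ),
          u0 j * ((tlam ⟨ρ + j.1, by omega⟩ - lam (Fin.castLE hρn.le i)) * W j i * v i)
            = tlam ⟨ρ + j.1, by omega⟩ * (u0 j * (W j i * v i))
              - lam (Fin.castLE hρn.le i) * (v i * (W j i * u0 j)) := by
        intro j i
        ring
      simp only [hsplit, Finset.sum_sub_distrib]
      have hT1 : ∑ j, ∑ i, tlam ⟨ρ + j.1, by omega⟩ * (u0 j * (W j i * v i))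
          = ∑ j, tlam ⟨ρ + j.1, by omega⟩ * (s * u0 j ^ 2) := by
        refine Finset.sum_congr rfl fun j _ => ?_
        rw [← Finset.mul_sum, ← Finset.mul_sum, hWvj j]
        ring
      have hT2 : ∑ j, ∑ i, lam (Fin.castLE hρn.le i) * (v i * (W j i * u0 j))
          = ∑ i, lam (Fin.castLE hρn.le i) * (s * v i ^ 2) := by
        rw [Finset.sum_comm]
        refine Finset.sum_congr rfl fun i _ => ?_
        rw [← Finset.mul_sum, ← Finset.mul_sum, hWtu0i i]
        ring
      rw [hT1, hT2]
      have hb1 : ∑ j, tlam ⟨ρ, hρn⟩ * (s * u0 j ^ 2)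
          ≤ ∑ j, tlam ⟨ρ + j.1, by omega⟩ * (s * u0 j ^ 2) := by
        refine Finset.sum_le_sum fun j _ => ?_
        refine mul_le_mul_of_nonneg_right ?_ (by positivity)
        exact htlamMono (by simp [Fin.le_def])
      have hb2 : ∑ i, lam (Fin.castLE hρn.le i) * (s * v i ^ 2)
          ≤ ∑ i, lam ⟨ρ - 1, by omega⟩ * (s * v i ^ 2) := by
        refine Finset.sum_le_sum fun i _ => ?_
        refine mul_le_mul_of_nonneg_right ?_ (by positivity)
        refine hlamMono ?_
        simp only [Fin.le_def, Fin.castLE]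
        omega
      have hc1 : ∑ j, tlam ⟨ρ, hρn⟩ * (s * u0 j ^ 2) = tlam ⟨ρ, hρn⟩ * s := by
        rw [← Finset.mul_sum, ← Finset.mul_sum, hu0n, mul_one]
      have hc2 : ∑ i, lam ⟨ρ - 1, by omega⟩ * (s * v i ^ 2) = lam ⟨ρ - 1, by omega⟩ * s := by
        rw [← Finset.mul_sum, ← Finset.mul_sum, hv1, mul_one]
      rw [hc1] at hb1
      rw [hc2] at hb2
      nlinarith [hb1, hb2]
    have hup : u0 ⬝ᵥ (tU₂ᵀ * (E * U₁)).mulVec v ≤ specNorm E := by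
      have h1 : (tU₂ᵀ * (E * U₁)).mulVec v = tU₂ᵀ.mulVec (E.mulVec (U₁.mulVec v)) := by
        rw [← Matrix.mulVec_mulVec, ← Matrix.mulVec_mulVec]
      rw [h1, Matrix.dotProduct_mulVec, Matrix.vecMul_transpose]
      have haa : ∑ x, (tU₂.mulVec u0 x) ^ 2 = 1 := by rw [hnormtU₂]; exact hu0n
      have hbb : ∑ x, (U₁.mulVec v x) ^ 2 = 1 := by rw [hnormU₁]; exact hv1
      have hCS : ((tU₂.mulVec u0) ⬝ᵥ (E.mulVec (U₁.mulVec v))) ^ 2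
          ≤ (∑ x, (tU₂.mulVec u0 x) ^ 2) * ∑ x, (E.mulVec (U₁.mulVec v) x) ^ 2 :=
        Finset.sum_mul_sq_le_sq_mul_sq Finset.univ _ _
      rw [haa, one_mul] at hCS
      calc (tU₂.mulVec u0) ⬝ᵥ (E.mulVec (U₁.mulVec v))
          ≤ |(tU₂.mulVec u0) ⬝ᵥ (E.mulVec (U₁.mulVec v))| := le_abs_self _
        _ = Real.sqrt (((tU₂.mulVec u0) ⬝ᵥ (E.mulVec (U₁.mulVec v))) ^ 2) :=
            (Real.sqrt_sq_eq_abs _).symm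
        _ ≤ Real.sqrt (∑ x, (E.mulVec (U₁.mulVec v) x) ^ 2) := Real.sqrt_le_sqrt hCS
        _ ≤ specNorm E := le_specNorm E _ (le_of_eq hbb)
    have hmain : s * (tlam ⟨ρ, hρn⟩ - lam ⟨ρ - 1, by omega⟩) ≤ specNorm E := hlow.trans hup
    have hfin : specNorm W ≤ s := by
      apply specNorm_le
      intro x hx
      have h1 : ∑ j, (W.mulVec x j) ^ 2 ≤ μ := by
        rw [hWx]
        refine (hv3 x).trans ?_
        nlinarith [hμ.le, hx]
      calc Real.sqrt (∑ j, (W.mulVec x j) ^ 2) ≤ Real.sqrt μ := Real.sqrt_le_sqrt h1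
        _ = s := hs.symm
    refine hfin.trans ?_
    rw [le_div_iff₀ hδpos]
    exact hmain
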